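/- Orthogonality of Hardy and divergence-free parts: if f⁺ = (I+H)φ with scalar φ ∈ L²(ℝ^n) and f⁰ ∈ L²(ℝ^n, ℝ^n) is divergence free (Σ_k R_k f⁰_k = 0), then the real part of the L² inner product vanishes: ∫_{ℝ^n} (f⁺ \overline{f⁰} + f⁰ \overline{f⁺}) dx = 0, i.e., Sc ∫ f⁺ \overline{f⁰} dx = 0. -/

import Mathlib

open MeasureTheory
open scoped RealInnerProductSpace

noncomputable def cliffordQ (n : ℕ) : QuadraticForm ℝ (Fin n → ℝ) :=
  QuadraticMap.weightedSumSquares ℝ (fun _ : Fin n => (-1 : ℝ))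

abbrev Cl (n : ℕ) := CliffordAlgebra (cliffordQ n)

noncomputable def cliffordE (n : ℕ) (k : Fin n) : Cl n :=
  CliffordAlgebra.ι (cliffordQ n) (Pi.single k 1)

/-- **Orthogonality of the Hardy and divergence-free parts.**  If
`f⁺ = (I+H)φ` (scalar part `φ`, vector part `-R_k φ`) with scalar `φ ∈ L²(ℝⁿ)`, and
`f⁰ = Σ_k f⁰_k e_k` is a divergence free (`Σ_k R_k f⁰_k = 0`) vector field in
`L²(ℝⁿ, ℝⁿ)`, then `∫ (f⁺ ⬝ conj(f⁰) + f⁰ ⬝ conj(f⁺)) dx = 0`, where conjugation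
sends `e_S` to `(−1)^{|S|} e_S` (i.e. `involute`); the (Clifford-valued) integral
vanishes in the sense that every real linear functional of the integrand
integrates to zero.  The Riesz transforms `R_k` are commuting skew-adjoint
bounded operators on `L²` with `Σ_k R_k² = -I`. -/
lemma sum_smul_cliffordE (n : ℕ) (v : Fin n → ℝ) :
    ∑ k : Fin n, v k • cliffordE n k = CliffordAlgebra.ι (cliffordQ n) v := by
  have h : ∀ k : Fin n, v k • cliffordE n k
      = CliffordAlgebra.ι (cliffordQ n) (v k • (Pi.single k 1 : Fin n → ℝ)) :=
    fun k => ((CliffordAlgebra.ι (cliffordQ n)).map_smul _ _).symm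
  simp_rw [h, ← map_sum]
  congr 1
  ext j
  simp [Pi.single_apply]

lemma polar_cliffordQ (n : ℕ) (v w : Fin n → ℝ) :
    QuadraticMap.polar (cliffordQ n) v w = -2 * ∑ k : Fin n, v k * w k := by
  simp only [QuadraticMap.polar, cliffordQ, QuadraticMap.weightedSumSquares_apply]
  rw [← Finset.sum_sub_distrib, ← Finset.sum_sub_distrib, Finset.mul_sum]
  refine Finset.sum_congr rfl fun k _ => ?_
  simp [Pi.add_apply]
  ring

lemma key (n : ℕ) (a : ℝ) (v w : Fin n → ℝ) :
    (algebraMap ℝ (Cl n) a + ∑ k : Fin n, v k • cliffordE n k) *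
        CliffordAlgebra.involute (∑ k : Fin n, w k • cliffordE n k) +
      (∑ k : Fin n, w k • cliffordE n k) *
        CliffordAlgebra.involute
          (algebraMap ℝ (Cl n) a + ∑ k : Fin n, v k • cliffordE n k) =
    algebraMap ℝ (Cl n) (2 * ∑ k : Fin n, v k * w k) := by
  rw [sum_smul_cliffordE, sum_smul_cliffordE]
  set A := algebraMap ℝ (Cl n) a with hA
  set V := CliffordAlgebra.ι (cliffordQ n) v with hV
  set W := CliffordAlgebra.ι (cliffordQ n) w with hW
  have hi1 : CliffordAlgebra.involute W = -W := by
    rw [hW, CliffordAlgebra.involute_ι]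
  have hi2 : CliffordAlgebra.involute (A + V) = A - V := by
    rw [hA, hV, map_add, CliffordAlgebra.involute_ι, sub_eq_add_neg,
      AlgHom.commutes]
  rw [hi1, hi2]
  have hc : A * W = W * A := (Algebra.commutes a W)
  have h : V * W + W * V = algebraMap ℝ (Cl n) (QuadraticMap.polar (cliffordQ n) v w) :=
    CliffordAlgebra.ι_mul_ι_add_swap v w
  have expand : (A + V) * -W + W * (A - V) = -(V * W + W * V) + (-(A*W) + W*A) := by
    noncomm_ring
  rw [expand, hc, neg_add_cancel, add_zero, h, polar_cliffordQ, ← map_neg]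
  congr 1
  ring

theorem hardy_divfree_orthogonal (n : ℕ) (hn : 1 ≤ n)
    (R : Fin n →
      (Lp ℝ 2 (volume : Measure (Fin n → ℝ))) →L[ℝ]
        (Lp ℝ 2 (volume : Measure (Fin n → ℝ))))
    (hcomm : ∀ j k : Fin n, ∀ g, R j (R k g) = R k (R j g))
    (hsq : ∀ g, ∑ k : Fin n, R k (R k g) = -g)
    (hskew : ∀ (k : Fin n) (g h : Lp ℝ 2 (volume : Measure (Fin n → ℝ))),
      ⟪R k g, h⟫ = -⟪g, R k h⟫)
    (φ : Lp ℝ 2 (volume : Measure (Fin n → ℝ)))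
    (f0 : Fin n → Lp ℝ 2 (volume : Measure (Fin n → ℝ)))
    (hdiv : ∑ k : Fin n, R k (f0 k) = 0) :
    ∀ ℓ : Cl n →ₗ[ℝ] ℝ,
      ∫ x : Fin n → ℝ,
        ℓ ((algebraMap ℝ (Cl n) (φ x) +
              ∑ k : Fin n, (-(R k φ : (Fin n → ℝ) → ℝ) x) • cliffordE n k) *
            CliffordAlgebra.involute
              (∑ k : Fin n, ((f0 k : (Fin n → ℝ) → ℝ) x) • cliffordE n k) +
          (∑ k : Fin n, ((f0 k : (Fin n → ℝ) → ℝ) x) • cliffordE n k) *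
            CliffordAlgebra.involute
              (algebraMap ℝ (Cl n) (φ x) +
                ∑ k : Fin n, (-(R k φ : (Fin n → ℝ) → ℝ) x) • cliffordE n k)) = 0 := by
  intro ℓ
  have hpt : ∀ x : Fin n → ℝ,
      ℓ ((algebraMap ℝ (Cl n) (φ x) +
              ∑ k : Fin n, (-(R k φ : (Fin n → ℝ) → ℝ) x) • cliffordE n k) *
            CliffordAlgebra.involute
              (∑ k : Fin n, ((f0 k : (Fin n → ℝ) → ℝ) x) • cliffordE n k) +
          (∑ k : Fin n, ((f0 k : (Fin n → ℝ) → ℝ) x) • cliffordE n k) *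
            CliffordAlgebra.involute
              (algebraMap ℝ (Cl n) (φ x) +
                ∑ k : Fin n, (-(R k φ : (Fin n → ℝ) → ℝ) x) • cliffordE n k)) =
      ∑ k : Fin n, ((R k φ : (Fin n → ℝ) → ℝ) x * (f0 k : (Fin n → ℝ) → ℝ) x) *
        (-2 * ℓ 1) := by
    intro x
    rw [key n (φ x) (fun k => -(R k φ : (Fin n → ℝ) → ℝ) x)
      (fun k => (f0 k : (Fin n → ℝ) → ℝ) x),
      Algebra.algebraMap_eq_smul_one, ℓ.map_smul, smul_eq_mul,
      Finset.mul_sum, Finset.sum_mul]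
    refine Finset.sum_congr rfl fun k _ => ?_
    ring
  simp_rw [hpt]
  have hint : ∀ k : Fin n,
      Integrable (fun x => ((R k φ : (Fin n → ℝ) → ℝ) x * (f0 k : (Fin n → ℝ) → ℝ) x) *
        (-2 * ℓ 1)) volume :=
    fun k => ((L2.integrable_inner (𝕜 := ℝ) (R k φ) (f0 k)).mul_const (-2 * ℓ 1)).congr
      (Filter.Eventually.of_forall fun x => by simp only [Real.inner_apply])
  rw [integral_finset_sum _ (fun k _ => hint k)]
  have hval : ∀ k : Fin n,
      ∫ x, ((R k φ : (Fin n → ℝ) → ℝ) x * (f0 k : (Fin n → ℝ) → ℝ) x) * (-2 * ℓ 1)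
        = ⟪R k φ, f0 k⟫ * (-2 * ℓ 1) := by
    intro k
    rw [integral_mul_const]
    congr 1
    rw [L2.inner_def]
    simp only [Real.inner_apply]
  simp_rw [hval, ← Finset.sum_mul]
  have hz : ∑ k : Fin n, ⟪R k φ, f0 k⟫ = 0 := by
    have h1 : ∑ k : Fin n, ⟪R k φ, f0 k⟫ = -⟪φ, ∑ k : Fin n, R k (f0 k)⟫ := by
      rw [inner_sum, ← Finset.sum_neg_distrib]
      exact Finset.sum_congr rfl fun k _ => hskew k φ (f0 k)
    rw [h1, hdiv, inner_zero_right, neg_zero]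
  rw [hz, zero_mul]
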